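/- Let K be an ordered field extending ℝ, γ a positive element of K, and ν : 𝒫(X) → K a finitely additive, nonnegative set function. Define μ(E) = st(ν(E)/γ) ∈ [0,∞] (standard part, with value +∞ for positive infinite elements). Then μ is superadditive on countable partitions: if A = ⋃ₙ Aₙ with the Aₙ pairwise disjoint, then μ(A) ≥ Σₙ μ(Aₙ). -/

import Mathlib

/-- The numerosity measure `μ(E) = st(ν(E)/γ)` associated to a nonnegative
finitely additive set function `ν` into an ordered field `K ⊇ ℝ` is
superadditive on countable partitions. -/
theorem stmt_9 (X : Type*) (K : Type*) [Field K] [LinearOrder K] [IsStrictOrderedRing K] (f : ℝ →+*o K)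
    (γ : K) (hγ : 0 < γ)
    (ν : Set X → K)
    (hadd : ∀ A B : Set X, A ∩ B = ∅ → ν (A ∪ B) = ν A + ν B)
    (hnonneg : ∀ A : Set X, 0 ≤ ν A)
    (μ : Set X → ENNReal)
    (hst : ∀ E : Set X,
      (∃ r : ℝ, 0 ≤ r ∧ μ E = ENNReal.ofReal r ∧
        ∀ n : ℕ, 0 < n → |ν E / γ - f r| < 1 / (n : K)) ∨
      (μ E = ⊤ ∧ ∀ n : ℕ, (n : K) < ν E / γ)) :
    ∀ A : ℕ → Set X, Pairwise (Function.onFun Disjoint A) →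
      (∑' n : ℕ, μ (A n)) ≤ μ (⋃ n : ℕ, A n) := by
  intro A hA
  have hfmono : StrictMono f := by
    have hinj : Function.Injective f := f.toRingHom.injective
    exact f.monotone'.strictMono_of_injective hinj
  have hempty : ν ∅ = 0 := by
    have := hadd ∅ ∅ (by simp)
    simp at this; linarith
  have hmono : ∀ B C : Set X, B ⊆ C → ν B ≤ ν C := by
    intro B C hBC
    calc ν B ≤ ν B + ν (C \ B) := le_add_of_nonneg_right (hnonneg _)
      _ = ν (B ∪ (C \ B)) := (hadd _ _ (by ext x; simp)).symm
      _ = ν C := by rw [Set.union_diff_cancel hBC]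
  have hfin : ∀ s : Finset ℕ, ν (⋃ i ∈ s, A i) = ∑ i ∈ s, ν (A i) := by
    intro s
    induction s using Finset.induction_on with
    | empty => simpa using hempty
    | @insert a s ha ih =>
      have hdisj : A a ∩ (⋃ i ∈ s, A i) = ∅ := by
        ext x
        simp only [Set.mem_inter_iff, Set.mem_iUnion, Set.mem_empty_iff_false, iff_false]
        rintro ⟨hxa, j, hj, hxj⟩
        have hne : a ≠ j := by rintro rfl; exact ha hj
        exact (hA hne).le_bot ⟨hxa, hxj⟩
      rw [Finset.set_biUnion_insert, hadd _ _ hdisj, ih, Finset.sum_insert ha]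
  rcases hst (⋃ n, A n) with ⟨r, hr0, hμU, happrox⟩ | ⟨htop, _⟩
  · -- finite case
    have hUbound : ν (⋃ n, A n) / γ < f r + 1 := by
      have := happrox 1 one_pos
      rw [abs_sub_lt_iff] at this
      push_cast at this
      linarith [this.1]
    have hr' : ∀ n : ℕ, ∃ rn : ℝ, 0 ≤ rn ∧ μ (A n) = ENNReal.ofReal rn ∧
        ∀ m : ℕ, 0 < m → |ν (A n) / γ - f rn| < 1 / (m : K) := by
      intro n
      rcases hst (A n) with h | ⟨_, hinf⟩
      · exact h
      · exfalso
        set m : ℕ := ⌈r⌉₊ + 2 with hm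
        have h1 : (m : K) < ν (A n) / γ := hinf m
        have h2 : ν (A n) / γ ≤ ν (⋃ n, A n) / γ :=
          div_le_div_of_nonneg_right (hmono _ _ (Set.subset_iUnion A n)) hγ.le
        have h3 : f r ≤ f (⌈r⌉₊ : ℝ) := f.monotone' (Nat.le_ceil r)
        rw [map_natCast] at h3
        have : (m : K) = (⌈r⌉₊ : K) + 2 := by rw [hm]; push_cast; ring
        rw [this] at h1
        linarith
    choose rs hrs0 hμA happ using hr'
    have key : ∀ s : Finset ℕ, ∑ i ∈ s, rs i ≤ r := by
      intro s
      by_contra hlt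
      push_neg at hlt
      set δ : ℝ := (∑ i ∈ s, rs i) - r with hδ
      have hδpos : 0 < δ := by simp [hδ]; linarith
      obtain ⟨m, hm⟩ := exists_nat_one_div_lt hδpos
      set c : ℕ := s.card + 1 with hc
      set n : ℕ := (m + 1) * c with hn
      have hnpos : 0 < n := by positivity
      have hsum : ∑ i ∈ s, ν (A i) / γ ≤ ν (⋃ k, A k) / γ := by
        rw [← Finset.sum_div]
        refine div_le_div_of_nonneg_right ?_ hγ.le
        rw [← hfin s]
        exact hmono _ _ (Set.iUnion₂_subset fun i _ => Set.subset_iUnion A i)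
      have hlow : ∀ i ∈ s, f (rs i) - 1 / (n : K) < ν (A i) / γ := by
        intro i _
        have := happ i n hnpos
        rw [abs_sub_lt_iff] at this
        linarith [this.2]
      have hsne : s.Nonempty := by
        rcases Finset.eq_empty_or_nonempty s with rfl | h
        · exfalso; simp at hlt; linarith
        · exact h
      have hlow' : f (∑ i ∈ s, rs i) - (s.card : K) / (n : K) < ∑ i ∈ s, ν (A i) / γ := by
        have h2 := Finset.sum_lt_sum_of_nonempty hsne hlow
        have h3 : f (∑ i ∈ s, rs i) - (s.card : K) / n
            = ∑ i ∈ s, (f (rs i) - 1 / (n:K)) := by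
          rw [Finset.sum_sub_distrib, Finset.sum_const, nsmul_eq_mul, map_sum]
          ring
        linarith
      have hKineq : f (∑ i ∈ s, rs i) - f r < (c : K) / (n : K) := by
        have hcard : ((s.card : K) + 1) ≤ (c : K) := by rw [hc]; push_cast; linarith
        have : f (∑ i ∈ s, rs i) - (s.card : K) / n < f r + 1 / n := by
          calc f (∑ i ∈ s, rs i) - (s.card : K) / n < ∑ i ∈ s, ν (A i) / γ := hlow'
            _ ≤ ν (⋃ k, A k) / γ := hsum
            _ < f r + 1 / n := by
                have := happrox n hnpos
                rw [abs_sub_lt_iff] at this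
                linarith [this.1]
        have hne : (n : K) ≠ 0 := by positivity
        have : f (∑ i ∈ s, rs i) - f r < ((s.card : K) + 1) / n := by
          rw [add_div]; linarith
        calc f (∑ i ∈ s, rs i) - f r < ((s.card : K) + 1) / n := this
          _ ≤ (c : K) / n := by
              apply div_le_div_of_nonneg_right ?_ ?_ |>.trans_eq rfl
              · exact hcard
              · positivity
      have hcn : (c : K) / (n : K) = 1 / ((m : K) + 1) := by
        have hc0 : (c : K) ≠ 0 := by positivity
        rw [hn]; push_cast
        rw [div_eq_div_iff (by positivity) (by positivity)]
        ring
      have hfδ : f δ = f (∑ i ∈ s, rs i) - f r := by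
        rw [hδ, map_sub]
      have hδlow : 1 / ((m : K) + 1) < f δ := by
        have := hfmono hm
        have heq : f (1 / ((m:ℝ)+1)) = 1 / ((m:K)+1) := by
          rw [map_div₀, map_one, map_add, map_natCast, map_one]
        rw [heq] at this
        exact this
      rw [hfδ] at hδlow
      rw [hcn] at hKineq
      linarith
    -- conclude
    rw [hμU]
    calc (∑' k, μ (A k)) = ∑' k, ENNReal.ofReal (rs k) := by
          exact tsum_congr fun k => by rw [hμA]
      _ = ⨆ s : Finset ℕ, ∑ i ∈ s, ENNReal.ofReal (rs i) := ENNReal.tsum_eq_iSup_sum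
      _ ≤ ENNReal.ofReal r := by
          refine iSup_le fun s => ?_
          rw [← ENNReal.ofReal_sum_of_nonneg fun i _ => hrs0 i]
          exact ENNReal.ofReal_le_ofReal (key s)
  · rw [htop]; exact le_top
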